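/- Let G be a graph with minimum degree δ(G) ≥ 1 and H any graph. Then ⌈(Δ(G)+1)·|V(H)|/2⌉ ≤ χ_{×2}(G∘H) ≤ χ_{×2}(G)·|V(H)|. -/

import Mathlib

open SimpleGraph

/-- The closed neighborhood `N[v]` of a vertex. -/
def closedNbhd {V : Type*} (G : SimpleGraph V) (v : V) : Set V :=
  insert v (G.neighborSet v)

/-- `B` is a `k`-limited packing: every closed neighborhood contains at most `k` vertices of `B`. -/
def IsLimitedPacking {V : Type*} (G : SimpleGraph V) (k : ℕ) (B : Set V) : Prop :=
  ∀ v : V, (B ∩ closedNbhd G v).ncard ≤ k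

/-- `P` is a partition of the vertex set of `G` into `k`-limited packing sets. -/
def IsLPPartition {V : Type*} (G : SimpleGraph V) (k : ℕ) (P : Finset (Set V)) : Prop :=
  (∀ B ∈ P, IsLimitedPacking G k B) ∧ (∀ v : V, ∃! B : Set V, B ∈ P ∧ v ∈ B)

/-- The `k`-limited packing partition number `χ_{×k}(G)`: minimum number of parts in a
partition of the vertex set into `k`-limited packing sets. -/
noncomputable def chiLP {V : Type*} (G : SimpleGraph V) (k : ℕ) : ℕ :=
  sInf {n | ∃ P : Finset (Set V), IsLPPartition G k P ∧ P.card = n}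

/-- The lexicographic product `G ∘ H` of two simple graphs. -/
def lexProd {V W : Type*} (G : SimpleGraph V) (H : SimpleGraph W) : SimpleGraph (V × W) where
  Adj x y := G.Adj x.1 y.1 ∨ (x.1 = y.1 ∧ H.Adj x.2 y.2)
  symm := by
    constructor
    rintro ⟨a, b⟩ ⟨c, d⟩ (h | ⟨h1, h2⟩)
    · exact Or.inl h.symm
    · exact Or.inr ⟨h1.symm, h2.symm⟩
  loopless := by
    constructor
    rintro ⟨a, b⟩ (h | ⟨h1, h2⟩)
    · exact G.ne_of_adj h rfl
    · exact H.ne_of_adj h2 rfl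

lemma exists_LPPartition {V : Type*} [Fintype V] (G : SimpleGraph V) {k : ℕ} (hk : 1 ≤ k) :
    ∃ P : Finset (Set V), IsLPPartition G k P := by
  classical
  refine ⟨Finset.univ.image (fun v => ({v} : Set V)), ?_, ?_⟩
  · intro B hB
    simp only [Finset.mem_image] at hB
    obtain ⟨u, -, rfl⟩ := hB
    intro w
    calc (({u} : Set V) ∩ closedNbhd G w).ncard ≤ ({u} : Set V).ncard :=
          Set.ncard_le_ncard Set.inter_subset_left (Set.finite_singleton u)
      _ = 1 := Set.ncard_singleton u
      _ ≤ k := hk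
  · intro v
    refine ⟨{v}, ⟨Finset.mem_image_of_mem _ (Finset.mem_univ v), rfl⟩, ?_⟩
    rintro B ⟨hB, hvB⟩
    simp only [Finset.mem_image] at hB
    obtain ⟨u, -, rfl⟩ := hB
    obtain rfl : v = u := hvB
    rfl

lemma chiLP_set_nonempty {V : Type*} [Fintype V] (G : SimpleGraph V) {k : ℕ} (hk : 1 ≤ k) :
    {n | ∃ P : Finset (Set V), IsLPPartition G k P ∧ P.card = n}.Nonempty := by
  obtain ⟨P, hP⟩ := exists_LPPartition G hk
  exact ⟨P.card, P, hP, rfl⟩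

lemma chiLP_lexProd_upper {V W : Type*} [Fintype V] [Fintype W]
    (G : SimpleGraph V) (H : SimpleGraph W) :
    chiLP (lexProd G H) 2 ≤ chiLP G 2 * Fintype.card W := by
  classical
  obtain ⟨P, hP, hcard⟩ := Nat.sInf_mem (chiLP_set_nonempty G one_le_two)
  set Q : Finset (Set (V × W)) :=
    (P ×ˢ (Finset.univ : Finset W)).image (fun p => p.1 ×ˢ ({p.2} : Set W)) with hQ
  have hQpart : IsLPPartition (lexProd G H) 2 Q := by
    constructor
    · intro C hC
      simp only [hQ, Finset.mem_image] at hC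
      obtain ⟨⟨B, w⟩, hmem, rfl⟩ := hC
      have hBP : B ∈ P := (Finset.mem_product.mp hmem).1
      intro z
      have hsub : (B ×ˢ ({w} : Set W)) ∩ closedNbhd (lexProd G H) z ⊆
          (fun b => (b, w)) '' (B ∩ closedNbhd G z.1) := by
        rintro ⟨b, w'⟩ ⟨⟨hbB, hw⟩, hcn⟩
        obtain rfl : w' = w := hw
        refine ⟨b, ⟨hbB, ?_⟩, rfl⟩
        rcases hcn with heq | hadj
        · exact Or.inl (congrArg Prod.fst heq)
        · rcases hadj with h | ⟨h, -⟩
          · exact Or.inr h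
          · exact Or.inl h.symm
      calc ((B ×ˢ ({w} : Set W)) ∩ closedNbhd (lexProd G H) z).ncard
          ≤ ((fun b => (b, w)) '' (B ∩ closedNbhd G z.1)).ncard :=
            Set.ncard_le_ncard hsub (Set.toFinite _)
        _ ≤ (B ∩ closedNbhd G z.1).ncard := Set.ncard_image_le (Set.toFinite _)
        _ ≤ 2 := hP.1 B hBP z.1
    · rintro ⟨v, w⟩
      obtain ⟨B, ⟨hBP, hvB⟩, huniq⟩ := hP.2 v
      refine ⟨B ×ˢ ({w} : Set W), ⟨?_, ⟨hvB, rfl⟩⟩, ?_⟩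
      · exact Finset.mem_image.mpr ⟨(B, w), Finset.mem_product.mpr ⟨hBP, Finset.mem_univ w⟩, rfl⟩
      · rintro C ⟨hCQ, hvC⟩
        simp only [hQ, Finset.mem_image] at hCQ
        obtain ⟨⟨B', w'⟩, hmem, rfl⟩ := hCQ
        obtain ⟨hvB', hw⟩ := hvC
        obtain rfl : w = w' := hw
        have : B' = B := huniq B' ⟨(Finset.mem_product.mp hmem).1, hvB'⟩
        rw [this]
  calc chiLP (lexProd G H) 2 ≤ Q.card := Nat.sInf_le ⟨Q, hQpart, rfl⟩
    _ ≤ (P ×ˢ (Finset.univ : Finset W)).card := Finset.card_image_le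
    _ = P.card * Fintype.card W := by rw [Finset.card_product, Finset.card_univ]
    _ = chiLP G 2 * Fintype.card W := by rw [hcard]; rfl

lemma chiLP_lexProd_lower {V W : Type*} [Fintype V] [Nonempty V] [Fintype W]
    (G : SimpleGraph V) [DecidableRel G.Adj] (H : SimpleGraph W)
    (hδ : 1 ≤ G.minDegree) :
    ((G.maxDegree + 1) * Fintype.card W + 1) / 2 ≤ chiLP (lexProd G H) 2 := by
  classical
  obtain ⟨P, hP, hcard⟩ := Nat.sInf_mem (chiLP_set_nonempty (lexProd G H) one_le_two)
  rw [chiLP, ← hcard]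
  obtain ⟨v, hv⟩ := G.exists_maximal_degree_vertex
  have hdeg : 1 ≤ G.degree v := le_trans hδ (G.minDegree_le_degree v)
  obtain ⟨y, hy⟩ : ∃ y, G.Adj v y := by
    rw [← G.card_neighborFinset_eq_degree] at hdeg
    obtain ⟨y, hy⟩ := Finset.card_pos.mp hdeg
    exact ⟨y, (G.mem_neighborFinset v y).mp hy⟩
  set T : Finset (V × W) := (insert v (G.neighborFinset v)) ×ˢ Finset.univ with hT
  have hTcard : T.card = (G.maxDegree + 1) * Fintype.card W := by
    rw [hT, Finset.card_product, Finset.card_univ,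
      Finset.card_insert_of_notMem (G.notMem_neighborFinset_self v),
      G.card_neighborFinset_eq_degree, hv]
  -- helpers
  have hAdjMem : ∀ (a b : V × W), G.Adj a.1 b.1 → b ∈ closedNbhd (lexProd G H) a :=
    fun a b h => Or.inr (Or.inl h)
  have hself : ∀ a : V × W, a ∈ closedNbhd (lexProd G H) a := fun a => Set.mem_insert _ _
  -- key: each part meets T in at most 2 vertices
  have key : ∀ B ∈ P, (T.filter (· ∈ B)).card ≤ 2 := by
    intro B hB
    by_contra hcon
    push_neg at hcon
    obtain ⟨e1, e2, e3, he1, he2, he3, h12, h13, h23⟩ := Finset.two_lt_card_iff.mp hcon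
    simp only [Finset.mem_filter, hT, Finset.mem_product, Finset.mem_insert,
      SimpleGraph.mem_neighborFinset] at he1 he2 he3
    obtain ⟨⟨hx1, -⟩, hB1⟩ := he1
    obtain ⟨⟨hx2, -⟩, hB2⟩ := he2
    obtain ⟨⟨hx3, -⟩, hB3⟩ := he3
    have hz : ∃ z : V × W, e1 ∈ closedNbhd (lexProd G H) z ∧
        e2 ∈ closedNbhd (lexProd G H) z ∧ e3 ∈ closedNbhd (lexProd G H) z := by
      rcases hx1 with h1v | h1a <;> rcases hx2 with h2v | h2a <;> rcases hx3 with h3v | h3a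
      · exact ⟨(y, e1.2), hAdjMem _ _ (by rw [h1v]; exact hy.symm),
          hAdjMem _ _ (by rw [h2v]; exact hy.symm), hAdjMem _ _ (by rw [h3v]; exact hy.symm)⟩
      · exact ⟨e3, hAdjMem _ _ (by rw [h1v]; exact h3a.symm),
          hAdjMem _ _ (by rw [h2v]; exact h3a.symm), hself e3⟩
      · exact ⟨e2, hAdjMem _ _ (by rw [h1v]; exact h2a.symm), hself e2,
          hAdjMem _ _ (by rw [h3v]; exact h2a.symm)⟩
      · exact ⟨e1, hself e1, hAdjMem _ _ (by rw [h1v]; exact h2a),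
          hAdjMem _ _ (by rw [h1v]; exact h3a)⟩
      · exact ⟨e1, hself e1, hAdjMem _ _ (by rw [h2v]; exact h1a.symm),
          hAdjMem _ _ (by rw [h3v]; exact h1a.symm)⟩
      · exact ⟨e2, hAdjMem _ _ (by rw [h2v]; exact h1a), hself e2,
          hAdjMem _ _ (by rw [h2v]; exact h3a)⟩
      · exact ⟨e3, hAdjMem _ _ (by rw [h3v]; exact h1a),
          hAdjMem _ _ (by rw [h3v]; exact h2a), hself e3⟩
      · exact ⟨(v, e1.2), hAdjMem _ _ h1a, hAdjMem _ _ h2a, hAdjMem _ _ h3a⟩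
    obtain ⟨z, hz1, hz2, hz3⟩ := hz
    have hsub : ({e1, e2, e3} : Set (V × W)) ⊆ B ∩ closedNbhd (lexProd G H) z := by
      rintro x (rfl | rfl | rfl)
      · exact ⟨hB1, hz1⟩
      · exact ⟨hB2, hz2⟩
      · exact ⟨hB3, hz3⟩
    have h3card : ({e1, e2, e3} : Set (V × W)).ncard = 3 := by
      rw [Set.ncard_insert_of_notMem (by simp [h12, h13]) (Set.toFinite _),
        Set.ncard_pair h23]
    have hge : 3 ≤ (B ∩ closedNbhd (lexProd G H) z).ncard :=
      h3card ▸ Set.ncard_le_ncard hsub (Set.toFinite _)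
    have := hP.1 B hB z
    omega
  -- fiberwise counting
  set f : V × W → Set (V × W) := fun x => (hP.2 x).choose with hf
  have hfspec : ∀ x : V × W, f x ∈ P ∧ x ∈ f x := fun x => (hP.2 x).choose_spec.1
  have hsum : T.card = ∑ B ∈ P, (T.filter (fun x => f x = B)).card :=
    Finset.card_eq_sum_card_fiberwise (fun x _ => (hfspec x).1)
  have hble : ∀ B ∈ P, (T.filter (fun x => f x = B)).card ≤ 2 := by
    intro B hB
    refine le_trans (Finset.card_le_card ?_) (key B hB)
    intro x hx
    rw [Finset.mem_filter] at hx ⊢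
    exact ⟨hx.1, hx.2 ▸ (hfspec x).2⟩
  have hTle : T.card ≤ 2 * P.card := by
    rw [hsum]
    calc ∑ B ∈ P, (T.filter (fun x => f x = B)).card ≤ ∑ _B ∈ P, 2 :=
          Finset.sum_le_sum hble
      _ = 2 * P.card := by rw [Finset.sum_const, smul_eq_mul, mul_comm]
  rw [hTcard] at hTle
  omega

/-- For a graph `G` with `δ(G) ≥ 1` and any graph `H`,
`⌈(Δ(G)+1)·|V(H)|/2⌉ ≤ χ_{×2}(G ∘ H) ≤ χ_{×2}(G)·|V(H)|`. -/
theorem chiLP_lexProd_bounds {V W : Type*} [Fintype V] [Nonempty V] [Fintype W]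
    (G : SimpleGraph V) [DecidableRel G.Adj] (H : SimpleGraph W)
    (hδ : 1 ≤ G.minDegree) :
    ((G.maxDegree + 1) * Fintype.card W + 1) / 2 ≤ chiLP (lexProd G H) 2 ∧
      chiLP (lexProd G H) 2 ≤ chiLP G 2 * Fintype.card W := by
  exact ⟨chiLP_lexProd_lower G H hδ, chiLP_lexProd_upper G H⟩
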